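/- Let f(x) = Σ_{j=1}^t c_j x^{δ_j} be a t-sparse polynomial over a field K with distinct exponents δ_j and nonzero coefficients c_j, and let ω ∈ K be nonzero with ω^{δ_j} pairwise distinct. Then the sequence a_i = f(ω^i) (i ≥ 0) is linearly generated by the polynomial Λ(z) = Π_{j=1}^t (z − ω^{δ_j}); that is, for all i ≥ 0, Σ_{k=0}^t λ_k a_{i+k} = 0 where Λ(z) = Σ_{k=0}^t λ_k z^k. -/
import Mathlib


open Polynomial Finset

/-- The sequence of evaluations `a_i = f(ω^i)` of a `t`-sparse (Laurent) polynomial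
`f = Σ c_j x^{δ_j}` is linearly generated by `Λ(z) = Π_j (z - ω^{δ_j})`. -/
theorem stmt4 (K : Type*) [Field K] (t : ℕ) (δ : Fin t → ℤ) (c : Fin t → K)
    (hc : ∀ j, c j ≠ 0) (hδ : Function.Injective δ) (ω : K) (hω : ω ≠ 0)
    (hdist : Function.Injective fun j => ω ^ (δ j))
    (a : ℕ → K) (ha : ∀ i : ℕ, a i = ∑ j, c j * (ω ^ (δ j)) ^ i)
    (Λ : K[X]) (hΛ : Λ = ∏ j, (X - C (ω ^ (δ j)))) :
    ∀ i : ℕ, ∑ k ∈ range (t + 1), Λ.coeff k * a (i + k) = 0 := by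
  have hdeg : Λ.natDegree = t := by
    rw [hΛ, natDegree_prod]
    · simp
    · intro j _
      exact X_sub_C_ne_zero _
  have heval : ∀ x : K, Λ.eval x = ∑ k ∈ range (t + 1), Λ.coeff k * x ^ k := by
    intro x
    exact eval_eq_sum_range' (by omega) x
  have hroot : ∀ j : Fin t, Λ.eval (ω ^ (δ j)) = 0 := by
    intro j
    rw [hΛ, eval_prod]
    exact Finset.prod_eq_zero (mem_univ j) (by simp)
  intro i
  calc ∑ k ∈ range (t + 1), Λ.coeff k * a (i + k)
      = ∑ k ∈ range (t + 1), ∑ j, c j * (ω ^ (δ j)) ^ i * (Λ.coeff k * (ω ^ (δ j)) ^ k) := by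
        refine Finset.sum_congr rfl fun k _ => ?_
        rw [ha, Finset.mul_sum]
        refine Finset.sum_congr rfl fun j _ => ?_
        rw [pow_add]; ring
    _ = ∑ j, c j * (ω ^ (δ j)) ^ i * Λ.eval (ω ^ (δ j)) := by
        rw [Finset.sum_comm]
        refine Finset.sum_congr rfl fun j _ => ?_
        rw [← Finset.mul_sum, heval]
    _ = 0 := by
        refine Finset.sum_eq_zero fun j _ => ?_
        rw [hroot]; ring
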